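/- Let (A, μ) be a power associative algebra over a field k of characteristic 0 and let β : A → A be an algebra morphism (β(xy) = β(x)β(y)). Then A_β = (A, μ_β, β) with μ_β(x,y) = β(xy) is a multiplicative Hom-power associative algebra. -/

import Mathlib

variable {k A : Type*} [Field k] [CharZero k] [AddCommGroup A] [Module k A]

/-- The `n`-th Hom-power: `x^1 = x`, `x^n = x^{n-1} · α^{n-2}(x)`. -/
def homPow (μ : A →ₗ[k] A →ₗ[k] A) (α : A →ₗ[k] A) (x : A) : ℕ → A
  | 0 => x
  | 1 => x
  | n + 2 => μ (homPow μ α x (n + 1)) ((α ^ n) x)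

/-- `A` is `n`-th Hom-power associative. -/
def IsNthHomPowerAssoc (μ : A →ₗ[k] A →ₗ[k] A) (α : A →ₗ[k] A) (n : ℕ) : Prop :=
  ∀ (x : A) (i : ℕ), 1 ≤ i → i ≤ n - 1 →
    homPow μ α x n =
      μ ((α ^ (n - i - 1)) (homPow μ α x i)) ((α ^ (i - 1)) (homPow μ α x (n - i)))

/-- `A` is Hom-power associative. -/
def IsHomPowerAssoc (μ : A →ₗ[k] A →ₗ[k] A) (α : A →ₗ[k] A) : Prop :=
  ∀ n : ℕ, 2 ≤ n → IsNthHomPowerAssoc μ α n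

/-- `A` is up to `n`-th Hom-power associative. -/
def IsUpToNthHomPowerAssoc (μ : A →ₗ[k] A →ₗ[k] A) (α : A →ₗ[k] A) (n : ℕ) : Prop :=
  ∀ m : ℕ, 2 ≤ m → m ≤ n → IsNthHomPowerAssoc μ α m

/-- The Hom-algebra `(A, μ, α)` is multiplicative. -/
def IsMultiplicative (μ : A →ₗ[k] A →ₗ[k] A) (α : A →ₗ[k] A) : Prop :=
  ∀ x y : A, α (μ x y) = μ (α x) (α y)


/-- The `n`-th right power of `x` in an ordinary algebra: `x^1 = x`, `x^{n+1} = x^n x`. -/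
def rightPow (μ : A →ₗ[k] A →ₗ[k] A) (x : A) : ℕ → A
  | 0 => x
  | 1 => x
  | n + 2 => μ (rightPow μ x (n + 1)) x

/-- An ordinary algebra `(A,μ)` is power associative. -/
def IsPowerAssoc (μ : A →ₗ[k] A →ₗ[k] A) : Prop :=
  ∀ (x : A) (n i : ℕ), 2 ≤ n → 1 ≤ i → i ≤ n - 1 →
    rightPow μ x n = μ (rightPow μ x (n - i)) (rightPow μ x i)

lemma pow_morph (μ : A →ₗ[k] A →ₗ[k] A) (β : A →ₗ[k] A)
    (hβμ : ∀ x y : A, β (μ x y) = μ (β x) (β y)) :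
    ∀ (n : ℕ) (a b : A), (β ^ n) (μ a b) = μ ((β ^ n) a) ((β ^ n) b) := by
  intro n
  induction n with
  | zero => simp
  | succ n ih =>
    intro a b
    simp only [pow_succ, Module.End.mul_apply, hβμ, ih]

lemma homPow_eq (μ : A →ₗ[k] A →ₗ[k] A) (β : A →ₗ[k] A)
    (hβμ : ∀ x y : A, β (μ x y) = μ (β x) (β y)) (x : A) :
    ∀ n : ℕ, homPow (μ.compr₂ β) β x n = (β ^ (n - 1)) (rightPow μ x n)
  | 0 => by simp [homPow, rightPow]
  | 1 => by simp [homPow, rightPow]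
  | n + 2 => by
    rw [homPow, rightPow, homPow_eq μ β hβμ x (n + 1)]
    show β (μ _ _) = _
    rw [show n + 2 - 1 = n + 1 from rfl]
    simp only [Nat.add_sub_cancel, pow_succ', Module.End.mul_apply,
      pow_morph μ β hβμ, hβμ]

/-- Corollary: if `(A,μ)` is a power associative algebra and `β` is an algebra
morphism, then `A_β = (A, β∘μ, β)` is a multiplicative Hom-power associative algebra. -/
theorem stmt2 (μ : A →ₗ[k] A →ₗ[k] A) (β : A →ₗ[k] A)
    (hpa : IsPowerAssoc μ)
    (hβμ : ∀ x y : A, β (μ x y) = μ (β x) (β y)) :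
    IsMultiplicative (μ.compr₂ β) β ∧ IsHomPowerAssoc (μ.compr₂ β) β := by
  constructor
  · intro x y
    simp only [LinearMap.compr₂_apply, hβμ]
  · intro n hn x i hi1 hi2
    have hin : i ≤ n := le_trans hi2 (Nat.sub_le n 1)
    have hkey := homPow_eq μ β hβμ
    rw [hkey x n, hkey x i, hkey x (n - i)]
    have hpa' := hpa x n (n - i) hn (by omega) (by omega)
    rw [show n - (n - i) = i by omega] at hpa'
    have comp_pow : ∀ (a b : ℕ) (y : A), (β ^ a) ((β ^ b) y) = (β ^ (a + b)) y := by
      intro a b y; rw [← Module.End.mul_apply, ← pow_add]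
    show _ = β (μ _ _)
    rw [hpa', comp_pow, comp_pow, show n - i - 1 + (i - 1) = n - 2 by omega,
      show i - 1 + (n - i - 1) = n - 2 by omega, ← pow_morph μ β hβμ]
    have h1 : ∀ z : A, β ((β ^ (n - 2)) z) = (β ^ (n - 1)) z := by
      intro z
      rw [← Module.End.mul_apply, ← pow_succ', show n - 2 + 1 = n - 1 by omega]
    rw [h1]
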